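/- Let m ≥ n ≥ 0 be integers and let 0 ≤ k ≤ n. Then in the Laurent polynomial P_m·P_n ∈ ℤ[q,q⁻¹], the coefficient of q^{m+n−2k} and the coefficient of q^{−(m+n−2k)} are each equal to (k+1)·(mn − k(m+n) + (2/3)k(k−1)). (This is the coefficient computation of §4.4 used to prove the explicit formulas of Theorem 1.3(c).) -/

import Mathlib

/-- The Laurent polynomial `P_r = r·q^r + (r−2)·q^{r−2} + ⋯ + (2−r)·q^{2−r} + (−r)·q^{−r}
= Σ_{j=0}^{r} (r−2j)·q^{r−2j} ∈ ℤ[q,q⁻¹]`. -/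
noncomputable def P (r : ℕ) : LaurentPolynomial ℤ :=
  ∑ j ∈ Finset.range (r + 1),
    LaurentPolynomial.C ((r : ℤ) - 2 * j) * LaurentPolynomial.T ((r : ℤ) - 2 * j)

/-- Coefficient extraction for the product `P m * P n` as a double sum. -/
lemma Pmul_apply (m n : ℕ) (x : ℤ) :
    (P m * P n).coeff x = ∑ i ∈ Finset.range (m+1), ∑ j ∈ Finset.range (n+1),
      if ((m:ℤ) - 2*i) + ((n:ℤ) - 2*j) = x then ((m:ℤ)-2*i)*((n:ℤ)-2*j) else 0 := by
  unfold P
  rw [Finset.sum_mul_sum]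
  simp only [← LaurentPolynomial.single_eq_C_mul_T, AddMonoidAlgebra.single_mul_single,
    AddMonoidAlgebra.coeff_sum, Finsupp.finset_sum_apply]
  refine Finset.sum_congr rfl fun i _ => ?_
  refine Finset.sum_congr rfl fun j _ => ?_
  rw [AddMonoidAlgebra.coeff_single_apply]

/-- Closed form for the quadratic sum `Σ_{i<N} (a-2i)(b+2i)`. -/
lemma sum_quad (N : ℕ) (a b : ℚ) :
    ∑ i ∈ Finset.range N, (a - 2*(i:ℚ))*(b + 2*(i:ℚ)) =
      N*a*b + (a-b)*((N:ℚ)-1)*N - (2/3)*((N:ℚ)-1)*N*(2*N-1) := by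
  induction N with
  | zero => simp
  | succ N ih =>
      rw [Finset.sum_range_succ, ih]
      push_cast
      ring

lemma main_sum (m n k : ℕ) (hmn : n ≤ m) (hk : k ≤ n) :
    ((∑ i ∈ Finset.range (m+1), ∑ j ∈ Finset.range (n+1),
      if ((m:ℤ) - 2*i) + ((n:ℤ) - 2*j) = (m : ℤ) + n - 2 * k
      then ((m:ℤ)-2*i)*((n:ℤ)-2*j) else 0 : ℤ) : ℚ) =
      ((k : ℚ) + 1) * ((m : ℚ) * n - k * ((m : ℚ) + n) + (2/3) * k * ((k : ℚ) - 1)) := by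
  have step1 : (∑ i ∈ Finset.range (m+1), ∑ j ∈ Finset.range (n+1),
      if ((m:ℤ) - 2*i) + ((n:ℤ) - 2*j) = (m : ℤ) + n - 2 * k
      then ((m:ℤ)-2*i)*((n:ℤ)-2*j) else 0)
      = ∑ i ∈ Finset.range (k+1), ((m:ℤ)-2*i)*((n:ℤ)-2*k+2*i) := by
    have h1 : ∀ i ∈ Finset.range (m+1),
        (∑ j ∈ Finset.range (n+1),
          if ((m:ℤ) - 2*i) + ((n:ℤ) - 2*j) = (m : ℤ) + n - 2 * k
          then ((m:ℤ)-2*i)*((n:ℤ)-2*j) else 0)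
        = if i ∈ Finset.range (k+1) then ((m:ℤ)-2*i)*((n:ℤ)-2*k+2*i) else 0 := by
      intro i _
      by_cases hik : i ≤ k
      · have : (∑ j ∈ Finset.range (n+1),
            if ((m:ℤ) - 2*i) + ((n:ℤ) - 2*j) = (m : ℤ) + n - 2 * k
            then ((m:ℤ)-2*i)*((n:ℤ)-2*j) else 0)
            = ∑ j ∈ Finset.range (n+1),
            if j = k - i then ((m:ℤ)-2*i)*((n:ℤ)-2*j) else 0 := by
          refine Finset.sum_congr rfl fun j _ => if_congr ?_ rfl rfl
          omega
        rw [this, Finset.sum_ite_eq' (Finset.range (n+1)) (k-i)]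
        have hmem : k - i ∈ Finset.range (n+1) := by
          simp only [Finset.mem_range]; omega
        rw [if_pos hmem, if_pos (by simp only [Finset.mem_range]; omega)]
        have : ((k - i : ℕ) : ℤ) = (k : ℤ) - i := by omega
        rw [this]; ring
      · rw [if_neg (by simp only [Finset.mem_range]; omega)]
        refine Finset.sum_eq_zero fun j _ => ?_
        rw [if_neg (by omega)]
    rw [Finset.sum_congr rfl h1, Finset.sum_ite_mem,
      Finset.inter_eq_right.mpr (Finset.range_subset_range.mpr (by omega))]
  rw [step1]
  push_cast
  have := sum_quad (k+1) (m : ℚ) ((n:ℚ) - 2*k)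
  rw [show (∑ i ∈ Finset.range (k+1), ((m:ℚ)-2*(i:ℚ))*((n:ℚ)-2*(k:ℚ)+2*(i:ℚ)))
      = ∑ i ∈ Finset.range (k+1), ((m:ℚ) - 2*(i:ℚ))*(((n:ℚ)-2*(k:ℚ)) + 2*(i:ℚ)) from
      Finset.sum_congr rfl fun i _ => by ring, this]
  push_cast
  ring

/-- For `m ≥ n ≥ 0` and `0 ≤ k ≤ n`, the coefficients of `q^{m+n−2k}` and of
`q^{−(m+n−2k)}` in `P_m·P_n` are each `(k+1)·(mn − k(m+n) + (2/3)k(k−1))`. -/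
theorem PmPn_outer_coeffs (m n k : ℕ) (hmn : n ≤ m) (hk : k ≤ n) :
    (((P m * P n).coeff ((m : ℤ) + n - 2 * k) : ℤ) : ℚ) =
        ((k : ℚ) + 1) * ((m : ℚ) * n - k * ((m : ℚ) + n) + (2/3) * k * ((k : ℚ) - 1)) ∧
    (((P m * P n).coeff (-((m : ℤ) + n - 2 * k)) : ℤ) : ℚ) =
        ((k : ℚ) + 1) * ((m : ℚ) * n - k * ((m : ℚ) + n) + (2/3) * k * ((k : ℚ) - 1)) := by
  constructor
  · rw [Pmul_apply]
    exact main_sum m n k hmn hk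
  · rw [Pmul_apply]
    have hneg : (∑ i ∈ Finset.range (m+1), ∑ j ∈ Finset.range (n+1),
        if ((m:ℤ) - 2*i) + ((n:ℤ) - 2*j) = -((m : ℤ) + n - 2 * k)
        then ((m:ℤ)-2*i)*((n:ℤ)-2*j) else 0)
        = ∑ i ∈ Finset.range (m+1), ∑ j ∈ Finset.range (n+1),
        if ((m:ℤ) - 2*i) + ((n:ℤ) - 2*j) = (m : ℤ) + n - 2 * k
        then ((m:ℤ)-2*i)*((n:ℤ)-2*j) else 0 := by
      rw [← Finset.sum_range_reflect]
      refine Finset.sum_congr rfl fun i hi => ?_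
      rw [← Finset.sum_range_reflect]
      refine Finset.sum_congr rfl fun j hj => ?_
      simp only [Finset.mem_range] at hi hj
      have hi' : i ≤ m := by omega
      have hj' : j ≤ n := by omega
      refine if_congr ?_ ?_ rfl
      · push_cast [Nat.cast_sub hi', Nat.cast_sub hj']
        constructor <;> intro h <;> linarith
      · push_cast [Nat.cast_sub hi', Nat.cast_sub hj']
        ring
    rw [hneg]
    exact main_sum m n k hmn hk
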